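/- Let h ∈ (0,1), ρ ∈ [0, π/2], ρ̃ ∈ [−π/2, π/2), and s ∈ ℝ, and set t = tan(ρ/2). Then (1−h) + (1+h)·s·e^{2iρ} + (1+h)·(1−s)·e^{2iρ̃} = 0 (as an equation in ℂ) holds if and only if s ∈ [h/(1+h), 1/(1+h)] and: t = 0 and ρ̃ = −π/2 when s = h/(1+h); t = 1 and ρ̃ = 0 when s = 1/(1+h); and otherwise tan ρ̃ = −1/(h·tan ρ) and t = (√(s(1−h²)) − √(h(1−s−hs)))/√(s−h+hs). -/

import Mathlib

open Real

set_option maxHeartbeats 4000000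

private lemma sq_eq_of_nonneg' {x y : ℝ} (hx : 0 ≤ x) (hy : 0 ≤ y) (hxy : x^2 = y^2) : x = y := by
  rw [← Real.sqrt_sq hx, ← Real.sqrt_sq hy, hxy]

private lemma tan_double_aux (x : ℝ) (hc : Real.cos x ≠ 0) :
    Real.tan x * (1 + Real.cos (2*x)) = Real.sin (2*x) := by
  rw [Real.sin_two_mul, Real.cos_two_mul, Real.tan_eq_sin_div_cos]
  field_simp
  ring

private lemma stmt6_fwd_gen (h ρ ρ' s : ℝ) (hh0 : 0 < h) (hh1 : h < 1)
    (hρ1 : 0 ≤ ρ) (hρ2 : ρ ≤ π/2) (hq1 : -(π/2) ≤ ρ') (hq2 : ρ' < π/2)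
    (P : 1 - h + (1+h)*s*Real.cos (2*ρ) + (1+h)*(1-s)*Real.cos (2*ρ') = 0)
    (Q : (1+h)*s*Real.sin (2*ρ) + (1+h)*(1-s)*Real.sin (2*ρ') = 0)
    (hblt : h < (1+h)*s) (hbub : (1+h)*s < 1) :
    Real.tan ρ' = -1 / (h * Real.tan ρ) ∧
    Real.tan (ρ / 2) =
      (Real.sqrt (s * (1 - h ^ 2)) - Real.sqrt (h * (1 - s - h * s)))
        / Real.sqrt (s - h + h * s) := by
  have hπ := Real.pi_pos
  have h1p : (0:ℝ) < 1 + h := by linarith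
  set X := Real.cos (2*ρ) with hXdef
  set S := Real.sin (2*ρ) with hSdef
  set X' := Real.cos (2*ρ') with hX'def
  set S' := Real.sin (2*ρ') with hS'def
  have p2 : S^2 + X^2 = 1 := Real.sin_sq_add_cos_sq (2*ρ)
  have p2' : S'^2 + X'^2 = 1 := Real.sin_sq_add_cos_sq (2*ρ')
  have hh2 : (0:ℝ) < 1 - h^2 := by nlinarith only [hh0, hh1]
  have hspos : 0 < s := by nlinarith only [hblt, hh0, hh1]
  have hs1 : s < 1 := by nlinarith only [hbub, hh0, hh1]
  have hbpos : 0 < (1+h)*s := by linarith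
  have hcpos : 0 < (1+h)*(1-s) := mul_pos h1p (by linarith)
  have hX'eq : ((1+h)*(1-s)) * X' = -(1-h) - ((1+h)*s) * X := by linarith
  have hS'eq : ((1+h)*(1-s)) * S' = -(((1+h)*s) * S) := by linarith
  have star : ((1+h)*(1-s))^2 = (1-h)^2 + ((1+h)*s)^2 + 2*(1-h)*((1+h)*s)*X := by
    linear_combination (((1+h)*(1-s))*X' - (1-h) - ((1+h)*s)*X) * hX'eq
      + (((1+h)*(1-s))*S' - ((1+h)*s)*S) * hS'eq
      + (-((1+h)*(1-s))^2) * p2' + (((1+h)*s)^2) * p2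
  have hXeq2 : ((1+h)*s) * X = -(1-h) - ((1+h)*(1-s)) * X' := by linarith
  have hSeq2 : ((1+h)*s) * S = -(((1+h)*(1-s)) * S') := by linarith
  have star2 : ((1+h)*s)^2 = (1-h)^2 + ((1+h)*(1-s))^2 + 2*(1-h)*((1+h)*(1-s))*X' := by
    linear_combination (((1+h)*s)*X - (1-h) - ((1+h)*(1-s))*X') * hXeq2
      + (((1+h)*s)*S - ((1+h)*(1-s))*S') * hSeq2
      + (-((1+h)*s)^2) * p2 + (((1+h)*(1-s))^2) * p2'
  have key1 : 2*((1+h)*s) - 2*h = (1-h)*((1+h)*s)*(1-X) := by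
    linear_combination (-1/2 : ℝ) * star
  have key2 : 2 - 2*((1+h)*s) = (1-h)*((1+h)*(1-s))*(1-X') := by
    linear_combination (-1/2 : ℝ) * star2
  have key2' : 2*h*(2*((1+h)*s) - 2*h) = 2*((1-h)*((1+h)*(1-s)))*(1+X') := by
    linear_combination star2
  have key3 : 2*h*(2 - 2*((1+h)*s)) = 2*((1-h)*((1+h)*s))*(1+X) := by
    linear_combination star
  have hXlt : X < 1 := by
    nlinarith only [key1, hblt, hh0, hh1, mul_pos (show (0:ℝ) < 1-h by linarith) hbpos]
  have hXgt : -1 < X := by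
    nlinarith only [key3, hbub, hh0, hh1, mul_pos (show (0:ℝ) < 1-h by linarith) hbpos]
  have hX'gt : -1 < X' := by
    nlinarith only [key2', hblt, hh0, hh1, mul_pos (show (0:ℝ) < 1-h by linarith) hcpos]
  have hX'lt : X' < 1 := by
    nlinarith only [key2, hbub, hh0, hh1, mul_pos (show (0:ℝ) < 1-h by linarith) hcpos]
  have hρpos : 0 < ρ := by
    rcases hρ1.lt_or_eq with h1 | h1
    · exact h1
    · exfalso
      have : X = 1 := by rw [hXdef, ← h1]; norm_num
      linarith
  have hρlt : ρ < π/2 := by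
    rcases hρ2.lt_or_eq with h1 | h1
    · exact h1
    · exfalso
      have : X = -1 := by
        rw [hXdef, h1, show 2*(π/2) = π by ring]; exact Real.cos_pi
      linarith
  have hρ'gt : -(π/2) < ρ' := by
    rcases hq1.lt_or_eq with h1 | h1
    · exact h1
    · exfalso
      have : X' = -1 := by
        rw [hX'def, ← h1, show 2*(-(π/2)) = -π by ring, Real.cos_neg]; exact Real.cos_pi
      linarith
  have hcρ : 0 < Real.cos ρ := Real.cos_pos_of_mem_Ioo ⟨by linarith, hρlt⟩
  have hcρ' : 0 < Real.cos ρ' := Real.cos_pos_of_mem_Ioo ⟨hρ'gt, hq2⟩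
  have hSpos : 0 < S := by
    rw [hSdef]; exact Real.sin_pos_of_pos_of_lt_pi (by linarith) (by linarith)
  have h1X : (0:ℝ) < 1 + X := by linarith
  have h1X' : (0:ℝ) < 1 + X' := by linarith
  have ht : Real.tan ρ * (1 + X) = S := tan_double_aux ρ hcρ.ne'
  have ht' : Real.tan ρ' * (1 + X') = S' := tan_double_aux ρ' hcρ'.ne'
  have bracket : h*((1+h)*s)*(1-X) = (1+h)*(1-s) - (1-h) - ((1+h)*s)*X := by
    linear_combination (-1/2 : ℝ) * star
  have main : h * S * S' = -((1+X)*(1+X')) := by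
    have e : ((1+h)*(1-s)) * (h*S*S') = ((1+h)*(1-s)) * (-((1+X)*(1+X'))) := by
      linear_combination (h*S)*hS'eq + (1+X)*hX'eq - (1+X)*bracket - (h*((1+h)*s))*p2
    exact mul_left_cancel₀ hcpos.ne' e
  have htanρ : Real.tan ρ = S / (1+X) := (eq_div_iff h1X.ne').mpr ht
  have htanρ' : Real.tan ρ' = S' / (1+X') := (eq_div_iff h1X'.ne').mpr ht'
  have htppos : 0 < Real.tan ρ := htanρ ▸ div_pos hSpos h1X
  constructor
  · rw [htanρ, htanρ']
    rw [div_eq_div_iff h1X'.ne' (by positivity : h*(S/(1+X)) ≠ 0)]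
    have hfinal : S' * (h * (S/(1+X))) * (1+X) = (-1 * (1+X'))*(1+X) := by
      have e : S' * (h * (S/(1+X))) * (1+X) = h*S*S' * ((1/(1+X))*(1+X)) := by ring
      rw [e, one_div, inv_mul_cancel₀ h1X.ne', mul_one, main]; ring
    exact mul_right_cancel₀ h1X.ne' hfinal
  · -- second part
    have hA : 0 < s*(1-h^2) := mul_pos hspos hh2
    have hB : 0 < h*(1-s-h*s) := mul_pos hh0 (by linarith)
    have hC : 0 < s-h+h*s := by linarith
    have hcos2A : (s*(1-h^2)) * (1+X) = 2*(h*(1-s-h*s)) := by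
      linear_combination (-1/2 : ℝ) * key3
    have hsin2A : (s*(1-h^2)) * (1-X) = 2*(s-h+h*s) := by
      linear_combination (-1 : ℝ) * key1
    have hcossq : Real.cos ρ ^ 2 = (1+X)/2 := by
      rw [hXdef, Real.cos_two_mul]; ring
    have hsinsq : Real.sin ρ ^ 2 = (1-X)/2 := by
      have py := Real.sin_sq_add_cos_sq ρ
      linear_combination py - hcossq
    set u := Real.sqrt (s*(1-h^2)) with hudef
    set v := Real.sqrt (h*(1-s-h*s)) with hvdef
    set w := Real.sqrt (s-h+h*s) with hwdef
    have hu : u^2 = s*(1-h^2) := Real.sq_sqrt hA.le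
    have hv : v^2 = h*(1-s-h*s) := Real.sq_sqrt hB.le
    have hw : w^2 = s-h+h*s := Real.sq_sqrt hC.le
    have hupos : 0 < u := Real.sqrt_pos.mpr hA
    have hvpos : 0 < v := Real.sqrt_pos.mpr hB
    have hwpos : 0 < w := Real.sqrt_pos.mpr hC
    have hcosv : Real.cos ρ = v/u := by
      apply sq_eq_of_nonneg' hcρ.le (by positivity)
      rw [hcossq, div_pow, hv, hu]
      rw [div_eq_div_iff (by norm_num) hA.ne']
      linear_combination hcos2A
    have hsinw : Real.sin ρ = w/u := by
      apply sq_eq_of_nonneg' (Real.sin_nonneg_of_nonneg_of_le_pi hρ1 (by linarith)) (by positivity)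
      rw [hsinsq, div_pow, hw, hu]
      rw [div_eq_div_iff (by norm_num) hA.ne']
      linear_combination hsin2A
    have htanhalf : Real.tan (ρ/2) * (1 + Real.cos ρ) = Real.sin ρ := by
      have := tan_double_aux (ρ/2)
        (Real.cos_pos_of_mem_Ioo ⟨by linarith, by linarith⟩).ne'
      rwa [show 2*(ρ/2) = ρ by ring] at this
    rw [hcosv, hsinw] at htanhalf
    rw [eq_div_iff hwpos.ne']
    have huv : 0 < u + v := by positivity
    -- tan(ρ/2) * (u+v) = w
    have e2 : Real.tan (ρ/2) * (u+v) = w := by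
      have e3 : Real.tan (ρ/2) * ((u+v)/u) = w/u := by
        rw [← htanhalf]; field_simp
      field_simp at e3
      exact e3
    -- goal : tan(ρ/2) * w = u - v
    have e4 : (Real.tan (ρ/2) * w) * (u+v) = (u-v) * (u+v) := by
      have hw2 : w^2 = u^2 - v^2 := by
        rw [hu, hv, hw]; ring
      calc (Real.tan (ρ/2) * w) * (u+v) = (Real.tan (ρ/2) * (u+v)) * w := by ring
        _ = w * w := by rw [e2]
        _ = u^2 - v^2 := by rw [← hw2]; ring
        _ = (u-v)*(u+v) := by ring
    exact mul_right_cancel₀ huv.ne' e4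

private lemma stmt6_bwd_gen (h ρ ρ' s : ℝ) (hh0 : 0 < h) (hh1 : h < 1)
    (hρ1 : 0 ≤ ρ) (hρ2 : ρ ≤ π/2) (hq1 : -(π/2) ≤ ρ') (hq2 : ρ' < π/2)
    (hblt : h < (1+h)*s) (hbub : (1+h)*s < 1)
    (T' : Real.tan ρ' = -1 / (h * Real.tan ρ))
    (Tt : Real.tan (ρ / 2) =
      (Real.sqrt (s * (1 - h ^ 2)) - Real.sqrt (h * (1 - s - h * s)))
        / Real.sqrt (s - h + h * s)) :
    (1 - h + (1+h)*s*Real.cos (2*ρ) + (1+h)*(1-s)*Real.cos (2*ρ') = 0) ∧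
    ((1+h)*s*Real.sin (2*ρ) + (1+h)*(1-s)*Real.sin (2*ρ') = 0) := by
  have hπ := Real.pi_pos
  have h1p : (0:ℝ) < 1 + h := by linarith
  have hh2 : (0:ℝ) < 1 - h^2 := by nlinarith only [hh0, hh1]
  have hspos : 0 < s := by nlinarith only [hblt, hh0, hh1]
  have hs1 : s < 1 := by nlinarith only [hbub, hh0, hh1]
  have hA : 0 < s*(1-h^2) := mul_pos hspos hh2
  have hB : 0 < h*(1-s-h*s) := mul_pos hh0 (by linarith)
  have hC : 0 < s-h+h*s := by linarith
  set u := Real.sqrt (s*(1-h^2)) with hudef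
  set v := Real.sqrt (h*(1-s-h*s)) with hvdef
  set w := Real.sqrt (s-h+h*s) with hwdef
  have hu : u^2 = s*(1-h^2) := Real.sq_sqrt hA.le
  have hv : v^2 = h*(1-s-h*s) := Real.sq_sqrt hB.le
  have hw : w^2 = s-h+h*s := Real.sq_sqrt hC.le
  have hupos : 0 < u := Real.sqrt_pos.mpr hA
  have hvpos : 0 < v := Real.sqrt_pos.mpr hB
  have hwpos : 0 < w := Real.sqrt_pos.mpr hC
  have huvw : u^2 = v^2 + w^2 := by rw [hu, hv, hw]; ring
  have huv : v < u := by
    rw [hudef, hvdef]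
    exact Real.sqrt_lt_sqrt hB.le (by linarith)
  -- half angle facts
  have hch : 0 < Real.cos (ρ/2) :=
    Real.cos_pos_of_mem_Ioo ⟨by linarith, by linarith⟩
  have hsec : Real.cos (ρ/2)^2 * (1 + Real.tan (ρ/2)^2) = 1 := by
    rw [Real.tan_eq_sin_div_cos]
    field_simp
    linarith [Real.sin_sq_add_cos_sq (ρ/2)]
  have hsinρ : Real.sin ρ = 2 * Real.tan (ρ/2) * Real.cos (ρ/2)^2 := by
    have h2 : Real.sin (2*(ρ/2)) = 2*Real.sin (ρ/2)*Real.cos (ρ/2) := Real.sin_two_mul _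
    rw [show 2*(ρ/2) = ρ by ring] at h2
    rw [h2, Real.tan_eq_sin_div_cos]
    field_simp
  have hcosρ : Real.cos ρ = 2*Real.cos (ρ/2)^2 - 1 := by
    have := Real.cos_two_mul (ρ/2)
    rwa [show 2*(ρ/2) = ρ by ring] at this
  have hcc : Real.cos (ρ/2)^2 * (2*u*(u-v)) = w^2 := by
    rw [Tt] at hsec
    have e : Real.cos (ρ/2)^2 * (w^2 + (u-v)^2) = w^2 := by
      field_simp at hsec
      linear_combination hsec
    linear_combination e + (Real.cos (ρ/2)^2) * huvw
  have huvpos : 0 < u - v := by linarith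
  have hsin : Real.sin ρ = w/u := by
    rw [hsinρ, Tt, eq_div_iff hupos.ne']
    have e : (2 * ((u-v)/w) * Real.cos (ρ/2)^2) * u * w = w * w := by
      calc (2 * ((u-v)/w) * Real.cos (ρ/2)^2) * u * w
          = (Real.cos (ρ/2)^2 * (2*u*(u-v))) * ((1/w) * w) := by ring
        _ = w^2 * 1 := by rw [hcc]; field_simp
        _ = w * w := by ring
    have := mul_right_cancel₀ hwpos.ne' e
    linarith
  have hcos : Real.cos ρ = v/u := by
    rw [hcosρ, eq_div_iff hupos.ne']
    have e : (2*Real.cos (ρ/2)^2 - 1) * u * (2*(u-v)) = v * (2*(u-v)) := by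
      calc (2*Real.cos (ρ/2)^2 - 1) * u * (2*(u-v))
          = 2*(Real.cos (ρ/2)^2 * (2*u*(u-v))) - 2*u*(u-v) := by ring
        _ = 2*w^2 - 2*u*(u-v) := by rw [hcc]
        _ = v * (2*(u-v)) := by linear_combination (-2 : ℝ)*huvw
    exact mul_right_cancel₀ (by positivity : (2*(u-v)) ≠ 0) e
  have htanρ : Real.tan ρ = w/v := by
    rw [Real.tan_eq_sin_div_cos, hsin, hcos]
    field_simp
  have htppos : 0 < Real.tan ρ := htanρ ▸ div_pos hwpos hvpos
  have hρ'gt : -(π/2) < ρ' := by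
    rcases hq1.lt_or_eq with h1 | h1
    · exact h1
    · exfalso
      have e0 : Real.tan ρ' = 0 := by
        rw [← h1, Real.tan_neg, Real.tan_pi_div_two, neg_zero]
      rw [T'] at e0
      have : -1/(h*Real.tan ρ) < 0 := by
        apply div_neg_of_neg_of_pos (by norm_num) (by positivity)
      rw [e0] at this
      exact lt_irrefl 0 this
  have hcρ' : 0 < Real.cos ρ' := Real.cos_pos_of_mem_Ioo ⟨hρ'gt, hq2⟩
  have htan' : Real.tan ρ' = -v/(h*w) := by
    rw [T', htanρ]
    rw [div_eq_div_iff (by positivity) (by positivity)]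
    field_simp
  have hsin' : Real.sin ρ' = (-v/(h*w)) * Real.cos ρ' := by
    rw [← htan', Real.tan_eq_sin_div_cos]
    field_simp
  have hden : h^2*w^2 + v^2 = h*((1-h^2)*(1-s)) := by
    linear_combination h^2*hw + hv
  have hcsq : Real.cos ρ'^2 * (h^2*w^2 + v^2) = h^2*w^2 := by
    have py' := Real.sin_sq_add_cos_sq ρ'
    rw [hsin'] at py'
    have e : ((-v/(h*w))*Real.cos ρ')^2 + Real.cos ρ'^2 = 1 := py'
    field_simp at e
    linear_combination e
  have hcos2E : Real.cos ρ'^2 * ((1-h^2)*(1-s)) = h * w^2 := by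
    have e : h * (Real.cos ρ'^2 * ((1-h^2)*(1-s))) = h * (h * w^2) := by
      linear_combination hcsq - Real.cos ρ'^2 * hden
    exact mul_left_cancel₀ hh0.ne' e
  -- values of double angle
  have hX2 : Real.cos (2*ρ) = 2*(v/u)^2 - 1 := by
    rw [Real.cos_two_mul, hcos]
  have hX'2 : Real.cos (2*ρ') = 2*Real.cos ρ'^2 - 1 := Real.cos_two_mul ρ'
  have hS2 : Real.sin (2*ρ) = 2*(w/u)*(v/u) := by
    rw [Real.sin_two_mul, hsin, hcos]
  have hS'2 : Real.sin (2*ρ') = 2*((-v/(h*w)) * Real.cos ρ')*Real.cos ρ' := by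
    rw [Real.sin_two_mul, hsin']
  have hXval : Real.cos (2*ρ) * (s*(1-h^2)) = 2*(h*(1-s-h*s)) - s*(1-h^2) := by
    rw [hX2]
    have e : (2*(v/u)^2 - 1) * u^2 = 2*v^2 - u^2 := by
      field_simp
    rw [hu, hv] at e
    linarith [e]
  have hX'val : Real.cos (2*ρ') * ((1-h^2)*(1-s)) = 2*(h*(s-h+h*s)) - (1-h^2)*(1-s) := by
    rw [hX'2]
    linear_combination 2*hcos2E + 2*h*hw
  constructor
  · -- P
    have hP : (1-h) * ((1-h^2)*(1-s)) * (s*(1-h^2)) *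
        (1 - h + (1+h)*s*Real.cos (2*ρ) + (1+h)*(1-s)*Real.cos (2*ρ')) = 0 := by
      linear_combination ((1-h)*((1-h^2)*(1-s))*(1+h)*s) * hXval
        + ((1-h)*(s*(1-h^2))*(1+h)*(1-s)) * hX'val
    have hnz : (1-h) * ((1-h^2)*(1-s)) * (s*(1-h^2)) ≠ 0 := by
      have : (0:ℝ) < (1-h) * ((1-h^2)*(1-s)) * (s*(1-h^2)) :=
        mul_pos (mul_pos (by linarith) (mul_pos hh2 (by linarith))) hA
      exact this.ne'
    rcases mul_eq_zero.mp hP with h1 | h1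
    · exact absurd h1 hnz
    · exact h1
  · -- Q
    have hSval : Real.sin (2*ρ) * (s*(1-h^2)) = 2*v*w := by
      rw [hS2]
      have e : (2*(w/u)*(v/u)) * u^2 = 2*v*w := by field_simp
      rw [hu] at e
      linarith [e]
    have hS'val : Real.sin (2*ρ') * ((1-h^2)*(1-s)) = -(2*v*w) := by
      rw [hS'2]
      have e : ((2*((-v/(h*w)) * Real.cos ρ')*Real.cos ρ') * ((1-h^2)*(1-s))) * (h*w)
          = (-(2*v*w)) * (h*w) := by
        have e2 : (2*((-v/(h*w)) * Real.cos ρ')*Real.cos ρ') * (h*w) = -(2*v) * Real.cos ρ'^2 := by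
          field_simp
        calc ((2*((-v/(h*w)) * Real.cos ρ')*Real.cos ρ') * ((1-h^2)*(1-s))) * (h*w)
            = ((2*((-v/(h*w)) * Real.cos ρ')*Real.cos ρ') * (h*w)) * ((1-h^2)*(1-s)) := by ring
          _ = (-(2*v) * Real.cos ρ'^2) * ((1-h^2)*(1-s)) := by rw [e2]
          _ = -(2*v) * (Real.cos ρ'^2 * ((1-h^2)*(1-s))) := by ring
          _ = -(2*v) * (h*w^2) := by rw [hcos2E]
          _ = (-(2*v*w)) * (h*w) := by ring
      exact mul_right_cancel₀ (by positivity : (h*w) ≠ 0) e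
    have hQ : ((1-h^2)*(s*(1-h^2))*((1-h^2)*(1-s))) *
        ((1+h)*s*Real.sin (2*ρ) + (1+h)*(1-s)*Real.sin (2*ρ')) = 0 := by
      linear_combination ((1-h^2)*((1-h^2)*(1-s))*(1+h)*s) * hSval
        + ((1-h^2)*(s*(1-h^2))*(1+h)*(1-s)) * hS'val
    rcases mul_eq_zero.mp hQ with h1 | h1
    · exact absurd h1 (by
        have : (0:ℝ) < (1-h^2)*(s*(1-h^2))*((1-h^2)*(1-s)) :=
          mul_pos (mul_pos hh2 hA) (mul_pos hh2 (by linarith))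
        exact this.ne')
    · exact h1

/-- Lemma 5 of the paper: with `t = tan(ρ/2)`, the balancing
equation `(1−h) + (1+h)·s·e^{2iρ} + (1+h)·(1−s)·e^{2iρ̃} = 0` holds iff
`s ∈ [h/(1+h), 1/(1+h)]` and `t`, `ρ̃` are as described. -/
theorem stmt6 (h ρ ρ' s : ℝ) (hh : h ∈ Set.Ioo (0 : ℝ) 1)
    (hρ : ρ ∈ Set.Icc 0 (π / 2)) (hρ' : ρ' ∈ Set.Ico (-(π / 2)) (π / 2)) :
    (((1 - h : ℝ) : ℂ) + (((1 + h) * s : ℝ) : ℂ) * Complex.exp (2 * ρ * Complex.I)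
        + (((1 + h) * (1 - s) : ℝ) : ℂ) * Complex.exp (2 * ρ' * Complex.I) = 0) ↔
    (h / (1 + h) ≤ s ∧ s ≤ 1 / (1 + h) ∧
      (s = h / (1 + h) → Real.tan (ρ / 2) = 0 ∧ ρ' = -(π / 2)) ∧
      (s = 1 / (1 + h) → Real.tan (ρ / 2) = 1 ∧ ρ' = 0) ∧
      (s ≠ h / (1 + h) → s ≠ 1 / (1 + h) →
        Real.tan ρ' = -1 / (h * Real.tan ρ) ∧
        Real.tan (ρ / 2) =
          (Real.sqrt (s * (1 - h ^ 2)) - Real.sqrt (h * (1 - s - h * s)))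
            / Real.sqrt (s - h + h * s))) := by
  obtain ⟨hh0, hh1⟩ := hh
  obtain ⟨hρ1, hρ2⟩ := hρ
  obtain ⟨hq1, hq2⟩ := hρ'
  have hπ := Real.pi_pos
  have h1p : (0:ℝ) < 1 + h := by linarith
  have hred : (((1 - h : ℝ) : ℂ) + (((1 + h) * s : ℝ) : ℂ) * Complex.exp (2 * ρ * Complex.I)
        + (((1 + h) * (1 - s) : ℝ) : ℂ) * Complex.exp (2 * ρ' * Complex.I) = 0) ↔
      ((1-h) + (1+h)*s*Real.cos (2*ρ) + (1+h)*(1-s)*Real.cos (2*ρ') = 0 ∧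
       (1+h)*s*Real.sin (2*ρ) + (1+h)*(1-s)*Real.sin (2*ρ') = 0) := by
    have e1 : (2 * (ρ:ℂ) * Complex.I) = ((2*ρ : ℝ):ℂ) * Complex.I := by push_cast; ring
    have e2 : (2 * (ρ':ℂ) * Complex.I) = ((2*ρ' : ℝ):ℂ) * Complex.I := by push_cast; ring
    rw [e1, e2, Complex.exp_mul_I, Complex.exp_mul_I,
      ← Complex.ofReal_cos, ← Complex.ofReal_sin, ← Complex.ofReal_cos, ← Complex.ofReal_sin,
      Complex.ext_iff]
    simp only [Complex.add_re, Complex.add_im, Complex.mul_re, Complex.mul_im,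
      Complex.ofReal_re, Complex.ofReal_im, Complex.I_re, Complex.I_im,
      Complex.zero_re, Complex.zero_im]
    constructor
    · rintro ⟨h1, h2⟩; constructor <;> linarith
    · rintro ⟨h1, h2⟩; constructor <;> linarith
  rw [hred]; clear hred
  set X := Real.cos (2*ρ) with hXdef
  set S := Real.sin (2*ρ) with hSdef
  set X' := Real.cos (2*ρ') with hX'def
  set S' := Real.sin (2*ρ') with hS'def
  have p2 : S^2 + X^2 = 1 := Real.sin_sq_add_cos_sq (2*ρ)
  have p2' : S'^2 + X'^2 = 1 := Real.sin_sq_add_cos_sq (2*ρ')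
  have hX1 : X ≤ 1 := Real.cos_le_one _
  have hXm1 : -1 ≤ X := Real.neg_one_le_cos _
  have hX'1 : X' ≤ 1 := Real.cos_le_one _
  have hX'm1 : -1 ≤ X' := Real.neg_one_le_cos _
  constructor
  · rintro ⟨P, Q⟩
    have hX'eq : ((1+h)*(1-s)) * X' = -(1-h) - ((1+h)*s) * X := by linarith
    have hS'eq : ((1+h)*(1-s)) * S' = -(((1+h)*s) * S) := by linarith
    have star : ((1+h)*(1-s))^2 = (1-h)^2 + ((1+h)*s)^2 + 2*(1-h)*((1+h)*s)*X := by
      linear_combination (((1+h)*(1-s))*X' - (1-h) - ((1+h)*s)*X) * hX'eq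
        + (((1+h)*(1-s))*S' - ((1+h)*s)*S) * hS'eq
        + (-((1+h)*(1-s))^2) * p2' + (((1+h)*s)^2) * p2
    have key1 : 2*((1+h)*s) - 2*h = (1-h)*((1+h)*s)*(1-X) := by
      linear_combination (-1/2 : ℝ) * star
    have hXeq2 : ((1+h)*s) * X = -(1-h) - ((1+h)*(1-s)) * X' := by linarith
    have hSeq2 : ((1+h)*s) * S = -(((1+h)*(1-s)) * S') := by linarith
    have star2 : ((1+h)*s)^2 = (1-h)^2 + ((1+h)*(1-s))^2 + 2*(1-h)*((1+h)*(1-s))*X' := by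
      linear_combination (((1+h)*s)*X - (1-h) - ((1+h)*(1-s))*X') * hXeq2
        + (((1+h)*s)*S - ((1+h)*(1-s))*S') * hSeq2
        + (-((1+h)*s)^2) * p2 + (((1+h)*(1-s))^2) * p2'
    have key2 : 2 - 2*((1+h)*s) = (1-h)*((1+h)*(1-s))*(1-X') := by
      linear_combination (-1/2 : ℝ) * star2
    have key2' : 2*h*(2*((1+h)*s) - 2*h) = 2*((1-h)*((1+h)*(1-s)))*(1+X') := by
      linear_combination star2
    have key3 : 2*h*(2 - 2*((1+h)*s)) = 2*((1-h)*((1+h)*s))*(1+X) := by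
      linear_combination star
    have hbr : ((1+h)*s) * (1 + h + (1-h)*X) = 2*h := by linear_combination key1
    have hbrpos : 0 < 1 + h + (1-h)*X := by nlinarith only [hXm1, hh0, hh1, mul_nonneg (by linarith : (0:ℝ) ≤ 1-h) (by linarith [hXm1] : (0:ℝ) ≤ 1+X)]
    have hbpos : 0 < (1+h)*s := by nlinarith only [hbr, hbrpos, hh0]
    have hspos : 0 < s := by
      rcases lt_or_ge 0 s with hpos | hle
      · exact hpos
      · exfalso
        have : (1+h)*s ≤ 0 := mul_nonpos_of_nonneg_of_nonpos h1p.le hle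
        linarith
    have hslb : h ≤ (1+h)*s := by
      nlinarith only [key1, hh0, mul_nonneg (mul_nonneg (by linarith : (0:ℝ) ≤ 1-h) hbpos.le) (by linarith : (0:ℝ) ≤ 1-X)]
    have hsub : (1+h)*s ≤ 1 := by
      rcases le_or_gt s 1 with hs1' | hs1'
      · nlinarith only [key2, mul_nonneg (mul_nonneg (by linarith : (0:ℝ) ≤ 1-h) (mul_nonneg h1p.le (by linarith : (0:ℝ) ≤ 1-s))) (by linarith : (0:ℝ) ≤ 1-X')]
      · exfalso
        nlinarith only [key2', hh0, hh1, h1p, hslb, mul_nonneg (mul_nonneg (by linarith : (0:ℝ) ≤ 1-h) (by linarith : (0:ℝ) ≤ 1+X')) (by linarith : (0:ℝ) ≤ s-1), mul_pos h1p (show (0:ℝ) < s-1 by linarith)]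
    refine ⟨by rw [div_le_iff₀ h1p]; linarith, by rw [le_div_iff₀ h1p]; linarith, ?_, ?_, ?_⟩
    · -- s = h/(1+h)
      intro hs
      have hb : (1+h)*s = h := by rw [hs]; field_simp
      have hc : (1+h)*(1-s) = 1 := by rw [hs]; field_simp; ring
      have hX : X = 1 := by
        have h0 : ((1-h)*h)*(1-X) = 0 := by
          linear_combination (-1 : ℝ) * key1 + (2 - (1-h)*(1-X)) * hb
        rcases mul_eq_zero.mp h0 with h1 | h1
        · exfalso
          have := mul_pos (show (0:ℝ) < 1-h by linarith) hh0
          have := mul_pos hh0 (show (0:ℝ) < 1-h by linarith)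
          linarith
        · linarith
      have hρ0 : ρ = 0 := by
        have h2ρ : 2*ρ = 0 := by
          rw [← Real.cos_eq_one_iff_of_lt_of_lt (by linarith) (by linarith)]
          exact hX
        linarith
      have hS0 : S = 0 := by rw [hSdef, hρ0]; simp
      have hS'0 : S' = 0 := by
        have := Q; rw [hS0, hc] at this; simpa using this
      have hX'v : X' = -1 := by
        have := P; rw [hX, hb, hc] at this; linarith
      refine ⟨by rw [hρ0]; simp, ?_⟩
      have hcos0 : Real.cos ρ' = 0 := by
        have hsq : Real.cos ρ' ^ 2 = 0 := by
          have := Real.cos_sq ρ'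
          rw [← hX'def] at this
          rw [this, hX'v]; ring
        exact pow_eq_zero_iff (by norm_num) |>.mp hsq
      by_contra hne
      have hgt : -(π/2) < ρ' := lt_of_le_of_ne hq1 (Ne.symm hne)
      have := Real.cos_pos_of_mem_Ioo ⟨hgt, hq2⟩
      rw [hcos0] at this; exact lt_irrefl 0 this
    · -- s = 1/(1+h)
      intro hs
      have hb : (1+h)*s = 1 := by rw [hs]; field_simp
      have hc : (1+h)*(1-s) = h := by rw [hs]; field_simp; ring
      have hX' : X' = 1 := by
        rw [hb, hc] at key2'
        have h0 : (h*(1-h))*(1-X') = 0 := by linear_combination (1/2 : ℝ) * key2'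
        rcases mul_eq_zero.mp h0 with h1 | h1
        · exfalso
          have := mul_pos (show (0:ℝ) < 1-h by linarith) hh0
          have := mul_pos hh0 (show (0:ℝ) < 1-h by linarith)
          linarith
        · linarith
      have hρ'0 : ρ' = 0 := by
        have h2ρ' : 2*ρ' = 0 := by
          rw [← Real.cos_eq_one_iff_of_lt_of_lt (by linarith) (by linarith)]
          exact hX'
        linarith
      have hS'0 : S' = 0 := by rw [hS'def, hρ'0]; simp
      have hS0 : S = 0 := by
        have := Q; rw [hS'0, hb] at this; simpa using this
      have hXv : X = -1 := by
        have := P; rw [hX', hb, hc] at this; linarith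
      have hρv : ρ = π/2 := by
        have hcos0 : Real.cos ρ = 0 := by
          have hsq : Real.cos ρ ^ 2 = 0 := by
            have := Real.cos_sq ρ
            rw [← hXdef] at this
            rw [this, hXv]; ring
          exact pow_eq_zero_iff (by norm_num) |>.mp hsq
        by_contra hne
        have hlt : ρ < π/2 := lt_of_le_of_ne hρ2 hne
        have := Real.cos_pos_of_mem_Ioo ⟨by linarith, hlt⟩
        rw [hcos0] at this; exact lt_irrefl 0 this
      constructor
      · rw [hρv, show (π/2)/2 = π/4 by ring]
        exact Real.tan_pi_div_four
      · exact hρ'0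
    · -- generic
      intro hne1 hne2
      have hblt : h < (1+h)*s := by
        rcases eq_or_lt_of_le hslb with h1 | h1
        · exfalso; exact hne1 (by rw [eq_div_iff h1p.ne']; linarith)
        · exact h1
      have hbub : (1+h)*s < 1 := by
        rcases eq_or_lt_of_le hsub with h1 | h1
        · exfalso; exact hne2 (by rw [eq_div_iff h1p.ne']; linarith)
        · exact h1
      exact stmt6_fwd_gen h ρ ρ' s hh0 hh1 hρ1 hρ2 hq1 hq2 P Q hblt hbub
  · rintro ⟨hs1, hs2, he1, he2, hgen⟩
    by_cases hc1 : s = h / (1 + h)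
    · obtain ⟨htan0, hρ'v⟩ := he1 hc1
      have hρ0 : ρ = 0 := by
        by_contra hne
        have hpos : 0 < ρ := lt_of_le_of_ne hρ1 (Ne.symm hne)
        have : 0 < Real.tan (ρ/2) :=
          Real.tan_pos_of_pos_of_lt_pi_div_two (by linarith) (by linarith)
        rw [htan0] at this; exact lt_irrefl 0 this
      have hXv : X = 1 := by rw [hXdef, hρ0]; norm_num
      have hSv : S = 0 := by rw [hSdef, hρ0]; norm_num
      have hX'v : X' = -1 := by
        rw [hX'def, hρ'v, show 2*(-(π/2)) = -π by ring, Real.cos_neg]; exact Real.cos_pi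
      have hS'v : S' = 0 := by
        rw [hS'def, hρ'v, show 2*(-(π/2)) = -π by ring, Real.sin_neg, Real.sin_pi, neg_zero]
      constructor
      · rw [hXv, hX'v, hc1]; field_simp; try ring
      · rw [hSv, hS'v]; ring
    · by_cases hc2 : s = 1/(1+h)
      · obtain ⟨htan1, hρ'v⟩ := he2 hc2
        have hρv : ρ = π/2 := by
          have e : ρ/2 = π/4 := by
            apply Real.injOn_tan ⟨by linarith, by linarith⟩ ⟨by linarith, by linarith⟩
            rw [htan1, Real.tan_pi_div_four]
          linarith
        have hXv : X = -1 := by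
          rw [hXdef, hρv, show 2*(π/2) = π by ring]; exact Real.cos_pi
        have hSv : S = 0 := by
          rw [hSdef, hρv, show 2*(π/2) = π by ring]; exact Real.sin_pi
        have hX'v : X' = 1 := by rw [hX'def, hρ'v]; norm_num
        have hS'v : S' = 0 := by rw [hS'def, hρ'v]; norm_num
        constructor
        · rw [hXv, hX'v, hc2]; field_simp; try ring
        · rw [hSv, hS'v]; ring
      · obtain ⟨T', Tt⟩ := hgen hc1 hc2
        have hblt : h < (1+h)*s := by
          have : h/(1+h) < s := lt_of_le_of_ne hs1 (Ne.symm hc1)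
          rw [div_lt_iff₀ h1p] at this; linarith
        have hbub : (1+h)*s < 1 := by
          have : s < 1/(1+h) := lt_of_le_of_ne hs2 hc2
          rw [lt_div_iff₀ h1p] at this; linarith
        exact stmt6_bwd_gen h ρ ρ' s hh0 hh1 hρ1 hρ2 hq1 hq2 hblt hbub T' Tt
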